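/- arXiv:2301.01090 — 4 statements merged into one kernel-verified Lean document; each statement's English description precedes it below -/
import Mathlib

section
/- Let h > 0, M ≥ 0, and let u : ℝ → ℝ be twice continuously differentiable on [x − h/2, x + h/2]. Let ū = (1/h) ∫_{x−h/2}^{x+h/2} u(y) dy, define the switch function m̃(a) = −a if |a| ≤ M h² and m̃(a) = 0 otherwise, and define the reconstructed value u_new = ū + m̃(ū − u(x)). Then |u_new − u(x)| ≤ (h²/24) · sup_{y ∈ [x−h/2, x+h/2]} |u''(y)|; i.e., the TVB-type integral reconstruction is second-order accurate regardless of whether the switch is activated. -/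
open intervalIntegral MeasureTheory Set

/-- The TVB-type integral reconstruction `u_new = ū + m̃(ū - u x)`, where
`m̃(a) = -a` if `|a| ≤ M h²` and `m̃(a) = 0` otherwise, is second-order accurate:
`|u_new - u x| ≤ (h²/24) · sup |u''|` regardless of whether the switch is activated. -/
theorem tvb_integral_reconstruction_second_order
    (x h M : ℝ) (hh : 0 < h) (hM : 0 ≤ M) (u u' u'' : ℝ → ℝ)
    (hu' : ∀ y ∈ Set.Icc (x - h / 2) (x + h / 2), HasDerivAt u (u' y) y)
    (hu'' : ∀ y ∈ Set.Icc (x - h / 2) (x + h / 2), HasDerivAt u' (u'' y) y)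
    (hcont : ContinuousOn u'' (Set.Icc (x - h / 2) (x + h / 2)))
    (ubar : ℝ) (hubar : ubar = (1 / h) * ∫ y in (x - h / 2)..(x + h / 2), u y)
    (mt : ℝ → ℝ) (hmt : ∀ a : ℝ, mt a = if |a| ≤ M * h ^ 2 then -a else 0)
    (unew : ℝ) (hunew : unew = ubar + mt (ubar - u x)) :
    |unew - u x| ≤ h ^ 2 / 24 * ⨆ y : Set.Icc (x - h / 2) (x + h / 2), |u'' y| := by
  set a := x - h / 2 with ha
  set b := x + h / 2 with hb
  have hab : a ≤ b := by simp only [ha, hb]; linarith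
  have hx : x ∈ Set.Icc a b := ⟨by simp only [ha]; linarith, by simp only [hb]; linarith⟩
  set C : ℝ := ⨆ y : Set.Icc a b, |u'' y| with hC
  -- boundedness of |u''| on the compact interval
  have hbdd : BddAbove (Set.range fun y : Set.Icc a b => |u'' y|) := by
    obtain ⟨C0, hC0⟩ := isCompact_Icc.exists_bound_of_continuousOn hcont
    exact ⟨C0, by rintro r ⟨y, rfl⟩; simpa [Real.norm_eq_abs] using hC0 y y.2⟩
  have hCle : ∀ y ∈ Set.Icc a b, |u'' y| ≤ C := fun y hy => le_ciSup hbdd ⟨y, hy⟩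
  have hCnonneg : 0 ≤ C := le_trans (abs_nonneg _) (hCle x hx)
  -- continuity of u and u'
  have hu'cont : ContinuousOn u' (Set.Icc a b) := fun t ht =>
    (hu'' t ht).continuousAt.continuousWithinAt
  have hucont : ContinuousOn u (Set.Icc a b) := fun t ht =>
    (hu' t ht).continuousAt.continuousWithinAt
  -- step 1 : |u' t - u' x| ≤ C * |t - x|
  have step1 : ∀ t ∈ Set.Icc a b, |u' t - u' x| ≤ C * |t - x| := by
    intro t ht
    have hsub : Set.uIcc x t ⊆ Set.Icc a b := Set.uIcc_subset_Icc hx ht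
    have key : ∫ s in x..t, u'' s = u' t - u' x :=
      intervalIntegral.integral_eq_sub_of_hasDerivAt
        (fun s hs => hu'' s (hsub hs))
        ((hcont.mono hsub).intervalIntegrable)
    rw [← key]
    have := intervalIntegral.norm_integral_le_of_norm_le_const
      (C := C) (f := u'') (a := x) (b := t)
      (fun s hs => by
        simpa [Real.norm_eq_abs] using hCle s (hsub (Set.uIoc_subset_uIcc hs)))
    simpa [Real.norm_eq_abs, abs_sub_comm] using this
  -- step 2 : Taylor bound
  have step2 : ∀ y ∈ Set.Icc a b, |u y - u x - u' x * (y - x)| ≤ C / 2 * (y - x) ^ 2 := by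
    intro y hy
    have hsub : Set.uIcc x y ⊆ Set.Icc a b := Set.uIcc_subset_Icc hx hy
    have hderiv : ∀ t ∈ Set.uIcc x y,
        HasDerivAt (fun t => u t - u' x * (t - x)) (u' t - u' x) t := by
      intro t ht
      have h1 := (hu' t (hsub ht)).sub
        ((((hasDerivAt_id t).sub_const x).const_mul (u' x)))
      simpa [Pi.sub_def] using h1
    have hint : IntervalIntegrable (fun t => u' t - u' x) volume x y :=
      (((hu'cont.mono hsub).sub continuousOn_const)).intervalIntegrable
    have key : ∫ t in x..y, (u' t - u' x) = u y - u x - u' x * (y - x) := by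
      have := intervalIntegral.integral_eq_sub_of_hasDerivAt hderiv hint
      rw [this]; ring
    rw [← key]
    rcases le_total x y with hxy | hxy
    · have h1 : |∫ t in x..y, (u' t - u' x)| ≤ ∫ t in x..y, |u' t - u' x| :=
        intervalIntegral.abs_integral_le_integral_abs hxy
      have h2 : (∫ t in x..y, |u' t - u' x|) ≤ ∫ t in x..y, C * (t - x) := by
        apply intervalIntegral.integral_mono_on hxy hint.abs
        · exact (continuousOn_const.mul ((continuousOn_id.sub continuousOn_const))).intervalIntegrable
        · intro t ht
          have ht' : t ∈ Set.Icc a b := Set.Icc_subset_Icc hx.1 hy.2 ht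
          calc |u' t - u' x| ≤ C * |t - x| := step1 t ht'
            _ = C * (t - x) := by rw [abs_of_nonneg (by linarith [ht.1])]
      have h3 : (∫ t in x..y, C * (t - x)) = C / 2 * (y - x) ^ 2 := by
        rw [intervalIntegral.integral_const_mul,
          intervalIntegral.integral_sub intervalIntegrable_id intervalIntegrable_const,
          integral_id, intervalIntegral.integral_const, smul_eq_mul]
        ring
      calc |∫ t in x..y, (u' t - u' x)| ≤ ∫ t in x..y, |u' t - u' x| := h1
        _ ≤ C / 2 * (y - x) ^ 2 := by rw [← h3]; exact h2
    · have hsymm : |∫ t in x..y, (u' t - u' x)| = |∫ t in y..x, (u' t - u' x)| := by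
        rw [intervalIntegral.integral_symm, abs_neg]
      rw [hsymm]
      have h1 : |∫ t in y..x, (u' t - u' x)| ≤ ∫ t in y..x, |u' t - u' x| :=
        intervalIntegral.abs_integral_le_integral_abs hxy
      have h2 : (∫ t in y..x, |u' t - u' x|) ≤ ∫ t in y..x, C * (x - t) := by
        apply intervalIntegral.integral_mono_on hxy hint.symm.abs
        · exact (continuousOn_const.mul ((continuousOn_const.sub continuousOn_id))).intervalIntegrable
        · intro t ht
          have ht' : t ∈ Set.Icc a b := Set.Icc_subset_Icc hy.1 hx.2 ht
          calc |u' t - u' x| ≤ C * |t - x| := step1 t ht'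
            _ = C * (x - t) := by rw [abs_sub_comm, abs_of_nonneg (by linarith [ht.2])]
      have h3 : (∫ t in y..x, C * (x - t)) = C / 2 * (y - x) ^ 2 := by
        rw [intervalIntegral.integral_const_mul,
          intervalIntegral.integral_sub intervalIntegrable_const intervalIntegrable_id,
          integral_id, intervalIntegral.integral_const, smul_eq_mul]
        ring
      calc |∫ t in y..x, (u' t - u' x)| ≤ ∫ t in y..x, |u' t - u' x| := h1
        _ ≤ C / 2 * (y - x) ^ 2 := by rw [← h3]; exact h2
  -- main bound on |ubar - u x|
  have hint_g : IntervalIntegrable (fun y => u y - u x - u' x * (y - x)) volume a b := by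
    apply ContinuousOn.intervalIntegrable
    rw [Set.uIcc_of_le hab]
    exact (hucont.sub continuousOn_const).sub
      (continuousOn_const.mul (continuousOn_id.sub continuousOn_const))
  have e1 : ∫ y in a..b, (u y - u x - u' x * (y - x)) = (∫ y in a..b, u y) - h * u x := by
    have hiu : IntervalIntegrable u volume a b := by
      apply ContinuousOn.intervalIntegrable; rwa [Set.uIcc_of_le hab]
    have hic : IntervalIntegrable (fun _ : ℝ => u x) volume a b := intervalIntegrable_const
    have hil : IntervalIntegrable (fun y => u' x * (y - x)) volume a b := by
      apply ContinuousOn.intervalIntegrable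
      exact continuousOn_const.mul (continuousOn_id.sub continuousOn_const)
    rw [intervalIntegral.integral_sub (hiu.sub hic) hil, intervalIntegral.integral_sub hiu hic,
      intervalIntegral.integral_const, intervalIntegral.integral_const_mul]
    have hz : (∫ y in a..b, (y - x)) = 0 := by
      rw [intervalIntegral.integral_sub intervalIntegrable_id intervalIntegrable_const,
        integral_id, intervalIntegral.integral_const, smul_eq_mul, ha, hb]
      ring
    rw [hz]
    have hba : b - a = h := by rw [ha, hb]; ring
    rw [hba, smul_eq_mul]; ring
  have hmain : |ubar - u x| ≤ C * h ^ 2 / 24 := by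
    have e2 : ubar - u x = (1 / h) * ∫ y in a..b, (u y - u x - u' x * (y - x)) := by
      rw [e1, hubar]; field_simp
    have hintb : IntervalIntegrable (fun y => C / 2 * (y - x) ^ 2) volume a b := by
      apply ContinuousOn.intervalIntegrable
      exact continuousOn_const.mul ((continuousOn_id.sub continuousOn_const).pow 2)
    have h1 : |∫ y in a..b, (u y - u x - u' x * (y - x))|
        ≤ ∫ y in a..b, |u y - u x - u' x * (y - x)| :=
      intervalIntegral.abs_integral_le_integral_abs hab
    have h2 : (∫ y in a..b, |u y - u x - u' x * (y - x)|)
        ≤ ∫ y in a..b, C / 2 * (y - x) ^ 2 := by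
      apply intervalIntegral.integral_mono_on hab hint_g.abs hintb
      intro y hy
      exact step2 y hy
    have h3 : (∫ y in a..b, C / 2 * (y - x) ^ 2) = C * h ^ 3 / 24 := by
      rw [intervalIntegral.integral_const_mul]
      have key : (∫ y in a..b, (y - x) ^ 2) = ∫ t in (a - x)..(b - x), t ^ 2 :=
        intervalIntegral.integral_comp_sub_right (a := a) (b := b) (fun s => s ^ 2) x
      rw [key, integral_pow]
      have e1 : a - x = -(h / 2) := by rw [ha]; ring
      have e2 : b - x = h / 2 := by rw [hb]; ring
      rw [e1, e2]
      norm_num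
      ring
    rw [e2, abs_mul, abs_of_nonneg (by positivity : (0:ℝ) ≤ 1 / h)]
    calc (1 / h) * |∫ y in a..b, (u y - u x - u' x * (y - x))|
        ≤ (1 / h) * (C * h ^ 3 / 24) := by
          apply mul_le_mul_of_nonneg_left _ (by positivity)
          rw [← h3]; exact le_trans h1 h2
      _ = C * h ^ 2 / 24 := by field_simp
  -- final case split on the switch
  rw [hunew, hmt]
  split_ifs with hsw
  · have : ubar + -(ubar - u x) - u x = 0 := by ring
    rw [this, abs_zero]
    exact mul_nonneg (by positivity) hCnonneg
  · have : ubar + 0 - u x = ubar - u x := by ring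
    rw [this]
    calc |ubar - u x| ≤ C * h ^ 2 / 24 := hmain
      _ = h ^ 2 / 24 * C := by ring
end

section
/- Let h₀ > 0 and let f : ℝ → ℝ be three times continuously differentiable on an open interval containing [x − h₀, x + h₀]. Define the smoothness indicator IS(h) = (13/12)(f(x−h) − 2f(x) + f(x+h))² + (1/4)(f(x−h) − f(x+h))². Then there exists a constant C ≥ 0 such that for all h with 0 < h ≤ h₀, |IS(h) − (f'(x))² h²| ≤ C h⁴. -/
open Set

lemma taylor2_aux (x h₀ : ℝ) (hh₀ : 0 < h₀) (f : ℝ → ℝ) (s : Set ℝ) (hs : IsOpen s)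
    (hsub : Set.Icc x (x + h₀) ⊆ s) (hf : ContDiffOn ℝ 3 f s) :
    ∃ M : ℝ, 0 ≤ M ∧ ∀ h : ℝ, 0 ≤ h → h ≤ h₀ →
      |f (x + h) - f x - deriv f x * h - deriv (deriv f) x * h ^ 2 / 2| ≤ M * h ^ 3 := by
  set I := Set.Icc x (x + h₀) with hI
  have hxle : x ≤ x + h₀ := by linarith
  have hxI : x ∈ I := ⟨le_rfl, hxle⟩
  have hu : UniqueDiffOn ℝ I := uniqueDiffOn_Icc (by linarith)
  have hdiff : ∀ y ∈ I, DifferentiableAt ℝ f y := fun y hy =>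
    (hf.differentiableOn (by norm_num)).differentiableAt (hs.mem_nhds (hsub hy))
  have hfI : ContDiffOn ℝ ((2 : ℕ) + 1) f I := by
    have := hf.mono hsub
    exact_mod_cast this
  obtain ⟨C, hC⟩ := exists_taylor_mean_remainder_bound (n := 2) hxle hfI
  have hdf : DifferentiableAt ℝ (deriv f) x := by
    have h2 : ContDiffOn ℝ 2 (deriv f) s := hf.deriv_of_isOpen hs (by norm_num)
    exact (h2.differentiableOn (by norm_num)).differentiableAt (hs.mem_nhds (hsub hxI))
  have hd1 : iteratedDerivWithin 1 f I x = deriv f x := by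
    rw [iteratedDerivWithin_one]
    exact (hdiff x hxI).derivWithin (hu x hxI)
  have hd2 : iteratedDerivWithin 2 f I x = deriv (deriv f) x := by
    rw [show (2 : ℕ) = 1 + 1 from rfl, iteratedDerivWithin_succ]
    have heq : derivWithin (iteratedDerivWithin 1 f I) I x = derivWithin (deriv f) I x := by
      apply derivWithin_congr
      · intro y hy
        rw [iteratedDerivWithin_one]
        exact (hdiff y hy).derivWithin (hu y hy)
      · rw [iteratedDerivWithin_one]
        exact (hdiff x hxI).derivWithin (hu x hxI)
    rw [heq]
    exact hdf.derivWithin (hu x hxI)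
  have htay : ∀ y : ℝ, taylorWithinEval f 2 I x y
      = f x + deriv f x * (y - x) + deriv (deriv f) x * (y - x) ^ 2 / 2 := by
    intro y
    rw [taylor_within_apply]
    simp [Finset.sum_range_succ, hd1, hd2, Nat.factorial]
    ring
  refine ⟨max C 0, le_max_right _ _, fun h h0 hh => ?_⟩
  have hyI : x + h ∈ I := ⟨by linarith, by linarith⟩
  have := hC (x + h) hyI
  rw [htay (x + h)] at this
  have h3 : (0:ℝ) ≤ h ^ 3 := by positivity
  calc |f (x + h) - f x - deriv f x * h - deriv (deriv f) x * h ^ 2 / 2|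
      = ‖f (x + h) - (f x + deriv f x * (x + h - x) + deriv (deriv f) x * (x + h - x) ^ 2 / 2)‖ := by
        rw [Real.norm_eq_abs]; ring_nf
    _ ≤ C * (x + h - x) ^ (2 + 1) := this
    _ ≤ max C 0 * h ^ 3 := by
        have : x + h - x = h := by ring
        rw [this]
        exact mul_le_mul_of_nonneg_right (le_max_left _ _) h3

/-- For `f` three times continuously differentiable on an open interval containing
`[x - h₀, x + h₀]`, the Jiang–Shu smoothness indicator
`IS(h) = (13/12)(f(x-h) - 2f(x) + f(x+h))² + (1/4)(f(x-h) - f(x+h))²`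
satisfies `|IS(h) - (f'(x))² h²| ≤ C h⁴` for all `0 < h ≤ h₀`. -/
theorem smoothness_indicator_fourth_order
    (x h₀ : ℝ) (hh₀ : 0 < h₀) (f : ℝ → ℝ) (s : Set ℝ) (hs : IsOpen s)
    (hsub : Set.Icc (x - h₀) (x + h₀) ⊆ s) (hf : ContDiffOn ℝ 3 f s) :
    ∃ C : ℝ, 0 ≤ C ∧ ∀ h : ℝ, 0 < h → h ≤ h₀ →
      |((13 / 12) * (f (x - h) - 2 * f x + f (x + h)) ^ 2
          + (1 / 4) * (f (x - h) - f (x + h)) ^ 2)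
        - (deriv f x) ^ 2 * h ^ 2| ≤ C * h ^ 4 := by
  have hsub1 : Set.Icc x (x + h₀) ⊆ s := fun y hy => hsub ⟨by linarith [hy.1], hy.2⟩
  have hxs : x ∈ s := hsub1 ⟨le_rfl, by linarith⟩
  -- right-side Taylor bound
  obtain ⟨M₁, hM₁0, hM₁⟩ := taylor2_aux x h₀ hh₀ f s hs hsub1 hf
  -- reflected function
  set g : ℝ → ℝ := fun t => f (2 * x - t) with hg
  set s' : Set ℝ := (fun t => 2 * x - t) ⁻¹' s with hs'def
  have hs' : IsOpen s' := hs.preimage (continuous_const.sub continuous_id)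
  have hsub' : Set.Icc x (x + h₀) ⊆ s' := by
    intro y hy
    have : 2 * x - y ∈ Set.Icc (x - h₀) (x + h₀) := ⟨by linarith [hy.2], by linarith [hy.1]⟩
    exact hsub this
  have hxs' : x ∈ s' := hsub' ⟨le_rfl, by linarith⟩
  have hgC : ContDiffOn ℝ 3 g s' := by
    have hinner : ContDiffOn ℝ 3 (fun t : ℝ => 2 * x - t) s' :=
      (contDiff_const.sub contDiff_id).contDiffOn
    exact hf.comp hinner (fun t ht => ht)
  have hdiff : ∀ y ∈ s, DifferentiableAt ℝ f y := fun y hy =>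
    (hf.differentiableOn (by norm_num)).differentiableAt (hs.mem_nhds hy)
  have hdf : DifferentiableAt ℝ (deriv f) x := by
    have h2 : ContDiffOn ℝ 2 (deriv f) s := hf.deriv_of_isOpen hs (by norm_num)
    exact (h2.differentiableOn (by norm_num)).differentiableAt (hs.mem_nhds hxs)
  have hEv : ∀ t ∈ s', HasDerivAt g (-(deriv f (2 * x - t))) t := by
    intro t ht
    have h1 : HasDerivAt f (deriv f (2 * x - t)) (2 * x - t) := (hdiff _ ht).hasDerivAt
    have h2 : HasDerivAt (fun t : ℝ => 2 * x - t) (-1) t := by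
      simpa using (hasDerivAt_id t).const_sub (2 * x)
    have := h1.comp t h2
    simpa [hg, Function.comp_def, mul_comm] using this
  have hdg : deriv g x = -(deriv f x) := by
    have := (hEv x hxs').deriv
    rwa [show 2 * x - x = x by ring] at this
  have hddg : deriv (deriv g) x = deriv (deriv f) x := by
    have hev : deriv g =ᶠ[nhds x] fun t => -(deriv f (2 * x - t)) := by
      filter_upwards [hs'.mem_nhds hxs'] with t ht
      exact (hEv t ht).deriv
    rw [hev.deriv_eq]
    have h1 : HasDerivAt (deriv f) (deriv (deriv f) x) (2 * x - x) := by
      rw [show 2 * x - x = x by ring]; exact hdf.hasDerivAt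
    have h2 : HasDerivAt (fun t : ℝ => 2 * x - t) (-1) x := by
      simpa using (hasDerivAt_id x).const_sub (2 * x)
    have h3 := (h1.comp x h2).neg
    have := h3.deriv
    simpa [Function.comp_def] using this
  obtain ⟨M₂, hM₂0, hM₂⟩ := taylor2_aux x h₀ hh₀ g s' hs' hsub' hgC
  set u := deriv f x with hu
  set w := deriv (deriv f) x with hw
  refine ⟨(13/12) * ((M₁ + M₂) * h₀ + |w|) ^ 2 + (1/4) * (M₁ + M₂) ^ 2 * h₀ ^ 2
      + |u| * (M₁ + M₂), by positivity, fun h h0 hh => ?_⟩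
  have hP := hM₁ h h0.le hh
  have hQ' := hM₂ h h0.le hh
  have hgx : g (x + h) = f (x - h) := by
    simp only [hg]; ring_nf
  rw [hgx, hdg, hddg] at hQ'
  have hgx0 : g x = f x := by simp [hg]; ring_nf
  rw [hgx0] at hQ'
  set P := f (x + h) - f x - u * h - w * h ^ 2 / 2 with hPdef
  set Q := f (x - h) - f x + u * h - w * h ^ 2 / 2 with hQdef
  have hQ : |Q| ≤ M₂ * h ^ 3 := by
    have : f (x - h) - f x - -u * h - w * h ^ 2 / 2 = Q := by rw [hQdef]; ring
    rwa [this] at hQ'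
  have hexpr : ((13 / 12) * (f (x - h) - 2 * f x + f (x + h)) ^ 2
          + (1 / 4) * (f (x - h) - f (x + h)) ^ 2) - u ^ 2 * h ^ 2
      = (13/12) * (P + Q + w * h ^ 2) ^ 2 + (1/4) * (Q - P) ^ 2 - u * h * (Q - P) := by
    rw [hPdef, hQdef]; ring
  rw [hexpr]
  have h2 : (0:ℝ) ≤ h ^ 2 := by positivity
  have t1 : |P + Q + w * h ^ 2| ≤ (M₁ + M₂) * h ^ 3 + |w| * h ^ 2 := by
    calc |P + Q + w * h ^ 2| ≤ |P| + |Q| + |w * h ^ 2| := abs_add_three _ _ _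
      _ ≤ M₁ * h ^ 3 + M₂ * h ^ 3 + |w| * h ^ 2 := by
          rw [abs_mul, abs_of_nonneg h2]
          exact add_le_add (add_le_add hP hQ) le_rfl
      _ = (M₁ + M₂) * h ^ 3 + |w| * h ^ 2 := by ring
  have t2 : |Q - P| ≤ (M₁ + M₂) * h ^ 3 := by
    calc |Q - P| ≤ |Q| + |P| := abs_sub _ _
      _ ≤ M₂ * h ^ 3 + M₁ * h ^ 3 := add_le_add hQ hP
      _ = (M₁ + M₂) * h ^ 3 := by ring
  have step1 : |(13/12) * (P + Q + w * h ^ 2) ^ 2 + (1/4) * (Q - P) ^ 2 - u * h * (Q - P)|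
      ≤ (13/12) * ((M₁ + M₂) * h ^ 3 + |w| * h ^ 2) ^ 2
        + (1/4) * ((M₁ + M₂) * h ^ 3) ^ 2 + |u| * h * ((M₁ + M₂) * h ^ 3) := by
    have a1 : (P + Q + w * h ^ 2) ^ 2 ≤ ((M₁ + M₂) * h ^ 3 + |w| * h ^ 2) ^ 2 := by
      rw [← sq_abs]
      exact pow_le_pow_left₀ (abs_nonneg _) t1 2
    have a2 : (Q - P) ^ 2 ≤ ((M₁ + M₂) * h ^ 3) ^ 2 := by
      rw [← sq_abs]
      exact pow_le_pow_left₀ (abs_nonneg _) t2 2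
    have a3 : |u * h * (Q - P)| ≤ |u| * h * ((M₁ + M₂) * h ^ 3) := by
      rw [abs_mul, abs_mul, abs_of_nonneg h0.le]
      exact mul_le_mul_of_nonneg_left t2 (by positivity)
    calc |(13/12) * (P + Q + w * h ^ 2) ^ 2 + (1/4) * (Q - P) ^ 2 - u * h * (Q - P)|
        ≤ |(13/12) * (P + Q + w * h ^ 2) ^ 2 + (1/4) * (Q - P) ^ 2| + |u * h * (Q - P)| :=
          abs_sub _ _
      _ ≤ |(13/12) * (P + Q + w * h ^ 2) ^ 2| + |(1/4) * (Q - P) ^ 2| + |u * h * (Q - P)| :=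
          add_le_add_left (abs_add_le _ _) _
      _ ≤ (13/12) * ((M₁ + M₂) * h ^ 3 + |w| * h ^ 2) ^ 2
          + (1/4) * ((M₁ + M₂) * h ^ 3) ^ 2 + |u| * h * ((M₁ + M₂) * h ^ 3) := by
          rw [abs_mul, abs_mul, abs_of_nonneg (by norm_num : (0:ℝ) ≤ 13/12),
            abs_of_nonneg (by norm_num : (0:ℝ) ≤ 1/4), abs_of_nonneg (sq_nonneg _),
            abs_of_nonneg (sq_nonneg _)]
          gcongr
  refine step1.trans ?_
  have hfac : (M₁ + M₂) * h ^ 3 + |w| * h ^ 2 = ((M₁ + M₂) * h + |w|) * h ^ 2 := by ring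
  have hb1 : (M₁ + M₂) * h + |w| ≤ (M₁ + M₂) * h₀ + |w| := by
    have := mul_le_mul_of_nonneg_left hh (by positivity : (0:ℝ) ≤ M₁ + M₂)
    linarith
  have h4 : (0:ℝ) ≤ h ^ 4 := by positivity
  have e1 : ((M₁ + M₂) * h ^ 3 + |w| * h ^ 2) ^ 2 = ((M₁ + M₂) * h + |w|) ^ 2 * h ^ 4 := by ring
  have e2 : ((M₁ + M₂) * h ^ 3) ^ 2 = ((M₁ + M₂) ^ 2 * h ^ 2) * h ^ 4 := by ring
  have e3 : |u| * h * ((M₁ + M₂) * h ^ 3) = (|u| * (M₁ + M₂)) * h ^ 4 := by ring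
  rw [e1, e2, e3]
  have b1 : ((M₁ + M₂) * h + |w|) ^ 2 ≤ ((M₁ + M₂) * h₀ + |w|) ^ 2 :=
    pow_le_pow_left₀ (by positivity) hb1 2
  have b2 : (M₁ + M₂) ^ 2 * h ^ 2 ≤ (M₁ + M₂) ^ 2 * h₀ ^ 2 :=
    mul_le_mul_of_nonneg_left (pow_le_pow_left₀ h0.le hh 2) (sq_nonneg _)
  linarith [mul_le_mul_of_nonneg_right b1 h4, mul_le_mul_of_nonneg_right b2 h4]
end

section
/- Let f : ℝ → ℝ be three times continuously differentiable on an open interval containing x, with f'(x) ≠ 0, and define IS(h) = (13/12)(f(x−h) − 2f(x) + f(x+h))² + (1/4)(f(x−h) − f(x+h))². Then IS(h)/((f'(x))² h²) tends to 1 as h tends to 0 from the right; that is, IS(h) = (f'(x) h)² (1 + O(h²)) in the sense that the relative error tends to zero. -/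
/-- For `f` three times continuously differentiable on an open interval containing `x`
with `f'(x) ≠ 0`, the Jiang–Shu smoothness indicator satisfies
`IS(h) / ((f'(x))² h²) → 1` as `h → 0⁺`. -/
theorem smoothness_indicator_relative_limit
    (x : ℝ) (f : ℝ → ℝ) (s : Set ℝ) (hs : IsOpen s) (hxs : x ∈ s)
    (hf : ContDiffOn ℝ 3 f s) (hf' : deriv f x ≠ 0) :
    Filter.Tendsto
      (fun h : ℝ =>
        ((13 / 12) * (f (x - h) - 2 * f x + f (x + h)) ^ 2
          + (1 / 4) * (f (x - h) - f (x + h)) ^ 2) / ((deriv f x) ^ 2 * h ^ 2))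
      (nhdsWithin 0 (Set.Ioi 0)) (nhds 1) := by
  set d := deriv f x with hd
  have hdiff : DifferentiableAt ℝ f x :=
    ((hf.contDiffAt (hs.mem_nhds hxs)).differentiableAt (by norm_num))
  have hder : HasDerivAt f d x := hdiff.hasDerivAt
  -- u h = (f (x+h) - f x)/h → d on 𝓝[>]0
  have hu : Filter.Tendsto (fun h : ℝ => (f (x + h) - f x) / h)
      (nhdsWithin 0 (Set.Ioi 0)) (nhds d) := by
    have := hder.tendsto_slope_zero_right
    simpa [smul_eq_mul, div_eq_inv_mul] using this
  -- v h = (f (x-h) - f x)/h → -d on 𝓝[>]0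
  have hneg : HasDerivAt (fun h : ℝ => f (x - h)) (-d) 0 := by
    have h1 : HasDerivAt (fun h : ℝ => x - h) (-1 : ℝ) 0 := by
      simpa using (hasDerivAt_id (0:ℝ)).const_sub x
    have hder' : HasDerivAt f d (x - 0) := by simpa using hder
    have := hder'.comp 0 h1
    simpa [Function.comp_def] using this
  have hv : Filter.Tendsto (fun h : ℝ => (f (x - h) - f x) / h)
      (nhdsWithin 0 (Set.Ioi 0)) (nhds (-d)) := by
    have := hneg.tendsto_slope_zero_right
    simpa [smul_eq_mul, div_eq_inv_mul] using this
  -- combine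
  have hlim : Filter.Tendsto
      (fun h : ℝ => ((13 / 12) * ((f (x + h) - f x) / h + (f (x - h) - f x) / h) ^ 2
        + (1 / 4) * ((f (x - h) - f x) / h - (f (x + h) - f x) / h) ^ 2) / d ^ 2)
      (nhdsWithin 0 (Set.Ioi 0))
      (nhds (((13 / 12) * (d + -d) ^ 2 + (1 / 4) * (-d - d) ^ 2) / d ^ 2)) := by
    exact (((hu.add hv).pow 2).const_mul _ |>.add
      (((hv.sub hu).pow 2).const_mul _)).div_const _
  have hval : ((13 / 12) * (d + -d) ^ 2 + (1 / 4) * (-d - d) ^ 2) / d ^ 2 = 1 := by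
    field_simp
    ring
  rw [hval] at hlim
  refine hlim.congr' ?_
  filter_upwards [self_mem_nhdsWithin] with h (hh : 0 < h)
  have hh0 : h ≠ 0 := ne_of_gt hh
  field_simp
  ring
end

section
/- Let φ : ℝ → ℝ satisfy φ(n) = 1 if n = 0 and φ(n) = 0 for every nonzero integer n. Let J₀ ≤ J_max be natural numbers, let F₀ ⊂ ℤ and F_J ⊂ ℤ (for J₀ ≤ J < J_max) be finite index sets, let c : F₀ → ℝ and d_J : F_J → ℝ be coefficients, and define g(x) = ∑_{k ∈ F₀} c(k) φ(2^{J₀} x − k) + ∑_{J = J₀}^{J_max − 1} ∑_{k ∈ F_J} d_J(k) φ(2^{J+1} x − (2k + 1)). Then for every level J' with J₀ ≤ J' < J_max and every l ∈ F_{J'}, evaluating at the point y = (2l + 1)/2^{J'+1} gives d_{J'}(l) = g(y) − ∑_{k ∈ F₀} c(k) φ(2^{J₀} y − k) − ∑_{J = J₀}^{J' − 1} ∑_{k ∈ F_J} d_J(k) φ(2^{J+1} y − (2k + 1)); that is, all wavelet terms of level strictly greater than J' vanish at y and the level-J' terms contribute exactly d_{J'}(l). -/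
/-- Validity of the reversed fast wavelet transform: for an interpolating scaling
function `φ` (with `φ(n) = δ_{0,n}` on ℤ) and a multiresolution expansion
`g(x) = ∑_{k ∈ F₀} c(k) φ(2^{J₀} x - k)
        + ∑_{J=J₀}^{J_max-1} ∑_{k ∈ F_J} d_J(k) φ(2^{J+1} x - (2k+1))`,
evaluating at the odd dyadic point `y = (2l+1)/2^{J'+1}` with `J₀ ≤ J' < J_max` and
`l ∈ F_{J'}` recovers the coefficient:
`d_{J'}(l) = g(y) - ∑_{k ∈ F₀} c(k) φ(2^{J₀} y - k)
             - ∑_{J=J₀}^{J'-1} ∑_{k ∈ F_J} d_J(k) φ(2^{J+1} y - (2k+1))`,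
since all wavelet terms of level strictly greater than `J'` vanish at `y` and the
level-`J'` terms contribute exactly `d_{J'}(l)`. -/
theorem reversed_fast_wavelet_transform
    (φ : ℝ → ℝ) (hφ0 : φ 0 = 1) (hφ : ∀ n : ℤ, n ≠ 0 → φ (n : ℝ) = 0)
    (J₀ Jmax : ℕ) (hJ : J₀ ≤ Jmax)
    (F₀ : Finset ℤ) (F : ℕ → Finset ℤ) (c : ℤ → ℝ) (d : ℕ → ℤ → ℝ)
    (g : ℝ → ℝ)
    (hg : ∀ x : ℝ, g x = (∑ k ∈ F₀, c k * φ (2 ^ J₀ * x - (k : ℝ)))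
        + ∑ J ∈ Finset.Ico J₀ Jmax, ∑ k ∈ F J,
            d J k * φ (2 ^ (J + 1) * x - (2 * (k : ℝ) + 1)))
    (J' : ℕ) (hJ'₁ : J₀ ≤ J') (hJ'₂ : J' < Jmax) (l : ℤ) (hl : l ∈ F J') :
    d J' l = g (((2 * l + 1 : ℤ) : ℝ) / 2 ^ (J' + 1))
        - (∑ k ∈ F₀, c k * φ (2 ^ J₀ * (((2 * l + 1 : ℤ) : ℝ) / 2 ^ (J' + 1)) - (k : ℝ)))
        - ∑ J ∈ Finset.Ico J₀ J', ∑ k ∈ F J,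
            d J k * φ (2 ^ (J + 1) * (((2 * l + 1 : ℤ) : ℝ) / 2 ^ (J' + 1))
              - (2 * (k : ℝ) + 1)) := by
  set y : ℝ := ((2 * l + 1 : ℤ) : ℝ) / 2 ^ (J' + 1) with hy
  have h2 : (2 : ℝ) ^ (J' + 1) ≠ 0 := by positivity
  rw [hg y, ← Finset.sum_Ico_consecutive _ hJ'₁ (le_of_lt hJ'₂),
    Finset.sum_eq_sum_Ico_succ_bot hJ'₂]
  have hyJ' : (2 : ℝ) ^ (J' + 1) * y = ((2 * l + 1 : ℤ) : ℝ) := by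
    rw [hy]; field_simp
  have hmid : (∑ k ∈ F J', d J' k * φ (2 ^ (J' + 1) * y - (2 * (k : ℝ) + 1))) = d J' l := by
    rw [Finset.sum_eq_single l]
    · rw [hyJ']
      have h0 : ((2 * l + 1 : ℤ) : ℝ) - (2 * (l : ℝ) + 1) = 0 := by push_cast; ring
      rw [h0, hφ0, mul_one]
    · intro k hk hkl
      rw [hyJ']
      have h1 : ((2 * l + 1 : ℤ) : ℝ) - (2 * (k : ℝ) + 1) = ((2 * (l - k) : ℤ) : ℝ) := by
        push_cast; ring
      rw [h1, hφ _ (by omega), mul_zero]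
    · intro h; exact absurd hl h
  have hhigh : ∀ J ∈ Finset.Ico (J' + 1) Jmax,
      (∑ k ∈ F J, d J k * φ (2 ^ (J + 1) * y - (2 * (k : ℝ) + 1))) = 0 := by
    intro J hJmem
    apply Finset.sum_eq_zero
    intro k hk
    obtain ⟨t, ht⟩ : ∃ t, J = J' + 1 + t := ⟨J - (J' + 1), by
      have := (Finset.mem_Ico.mp hJmem).1; omega⟩
    have harg : (2 : ℝ) ^ (J + 1) * y - (2 * (k : ℝ) + 1)
        = ((2 ^ (t + 1) * (2 * l + 1) - (2 * k + 1) : ℤ) : ℝ) := by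
      subst ht
      rw [hy]
      push_cast
      rw [pow_add, pow_add]
      field_simp
      ring
    have hne : (2 ^ (t + 1) * (2 * l + 1) - (2 * k + 1) : ℤ) ≠ 0 := by
      obtain ⟨m, hm⟩ : (2 : ℤ) ∣ 2 ^ (t + 1) * (2 * l + 1) :=
        dvd_mul_of_dvd_left (dvd_pow_self 2 (Nat.succ_ne_zero t)) _
      omega
    rw [harg, hφ _ hne, mul_zero]
  rw [Finset.sum_eq_zero hhigh, add_zero, hmid]
  ring
end
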